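/- (Embedding criterion) Let p ≠ q be positive integers and m, n positive integers. The grid graph □_m embeds into the (p,q)-leaper graph L_n if and only if there exist two paths α = A_1–A_2–⋯–A_m and β = B_1–B_2–⋯–B_m in the infinite leaper graph on ℤ² such that (i) the set of differences A_i − A_j (over all i,j) intersects the set of differences B_i − B_j only in the zero vector, and (ii) the bounding boxes of {A_i} and {B_j}, of sizes a_X × a_Y and b_X × b_Y respectively, satisfy a_X + b_X ≤ n + 1 and a_Y + b_Y ≤ n + 1. -/

import Mathlib

def gridAdj (a b : ℤ × ℤ) : Prop := |a.1 - b.1| + |a.2 - b.2| = 1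

def leapAdj (p q : ℤ) (a b : ℤ × ℤ) : Prop :=
  (|a.1 - b.1| = p ∧ |a.2 - b.2| = q) ∨ (|a.1 - b.1| = q ∧ |a.2 - b.2| = p)

def box (n : ℕ) : Set (ℤ × ℤ) := {v | 1 ≤ v.1 ∧ v.1 ≤ (n : ℤ) ∧ 1 ≤ v.2 ∧ v.2 ≤ (n : ℤ)}

/-- Horizontal size of the bounding box of a finite (nonempty) subset of `ℤ²`. -/
def widthX (S : Finset (ℤ × ℤ)) : ℤ :=
  (S.image Prod.fst).max.unbotD 0 - (S.image Prod.fst).min.untopD 0 + 1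

/-- Vertical size of the bounding box of a finite (nonempty) subset of `ℤ²`. -/
def widthY (S : Finset (ℤ × ℤ)) : ℤ :=
  (S.image Prod.snd).max.unbotD 0 - (S.image Prod.snd).min.untopD 0 + 1

/-- A sequence `A 0, …, A (m-1)` is a path in the infinite `(p,q)`-leaper graph on `ℤ²`:
distinct vertices, consecutive ones joined by leaper moves. -/
def leaperPath (p q : ℤ) (m : ℕ) (A : ℕ → ℤ × ℤ) : Prop :=
  Set.InjOn A (Set.Iio m) ∧ ∀ i, i + 1 < m → leapAdj p q (A i) (A (i + 1))

/-! ### Auxiliary lemmas -/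

def M (p q x y : ℤ) : Prop :=
  (x = p ∨ x = -p) ∧ (y = q ∨ y = -q) ∨ (x = q ∨ x = -q) ∧ (y = p ∨ y = -p)

lemma M_negx {p q x y : ℤ} (h : M p q x y) : M p q (-x) y := by unfold M at *; omega
lemma M_negy {p q x y : ℤ} (h : M p q x y) : M p q x (-y) := by unfold M at *; omega
lemma M_comm {p q x y : ℤ} (h : M p q x y) : M p q y x := by unfold M at *; tauto

set_option maxHeartbeats 1000000 in
lemma main' (p q x2 y2 x3 y3 x4 y4 : ℤ)
    (h2 : M p q x2 y2) (h3 : M p q x3 y3) (h4 : M p q x4 y4)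
    (hsx : p + x2 + x3 + x4 = 0) (hsy : q + y2 + y3 + y4 = 0)
    (h12 : p + x2 ≠ 0 ∨ q + y2 ≠ 0) (h23 : x2 + x3 ≠ 0 ∨ y2 + y3 ≠ 0) :
    p + x3 = 0 ∧ q + y3 = 0 := by
  unfold M at h2 h3 h4
  rcases h2 with ⟨hx2,hy2⟩|⟨hx2,hy2⟩ <;> rcases h3 with ⟨hx3,hy3⟩|⟨hx3,hy3⟩ <;>
    rcases h4 with ⟨hx4,hy4⟩|⟨hx4,hy4⟩ <;> omega

lemma key_int (p q x1 y1 x2 y2 x3 y3 x4 y4 : ℤ)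
    (h1 : M p q x1 y1) (h2 : M p q x2 y2) (h3 : M p q x3 y3) (h4 : M p q x4 y4)
    (hsx : x1 + x2 + x3 + x4 = 0) (hsy : y1 + y2 + y3 + y4 = 0)
    (h12 : x1 + x2 ≠ 0 ∨ y1 + y2 ≠ 0) (h23 : x2 + x3 ≠ 0 ∨ y2 + y3 ≠ 0) :
    x1 + x3 = 0 ∧ y1 + y3 = 0 := by
  unfold M at h1
  rcases h1 with ⟨hx1|hx1, hy1|hy1⟩|⟨hx1|hx1, hy1|hy1⟩
  · have := main' p q x2 y2 x3 y3 x4 y4 h2 h3 h4 (by omega) (by omega) (by omega) (by omega)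
    omega
  · have := main' p q x2 (-y2) x3 (-y3) x4 (-y4) (M_negy h2) (M_negy h3) (M_negy h4)
      (by omega) (by omega) (by omega) (by omega)
    omega
  · have := main' p q (-x2) y2 (-x3) y3 (-x4) y4 (M_negx h2) (M_negx h3) (M_negx h4)
      (by omega) (by omega) (by omega) (by omega)
    omega
  · have := main' p q (-x2) (-y2) (-x3) (-y3) (-x4) (-y4)
      (M_negx (M_negy h2)) (M_negx (M_negy h3)) (M_negx (M_negy h4))
      (by omega) (by omega) (by omega) (by omega)
    omega
  · have := main' p q y2 x2 y3 x3 y4 x4 (M_comm h2) (M_comm h3) (M_comm h4)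
      (by omega) (by omega) (by omega) (by omega)
    omega
  · have := main' p q (-y2) x2 (-y3) x3 (-y4) x4
      (M_negx (M_comm h2)) (M_negx (M_comm h3)) (M_negx (M_comm h4))
      (by omega) (by omega) (by omega) (by omega)
    omega
  · have := main' p q y2 (-x2) y3 (-x3) y4 (-x4)
      (M_negy (M_comm h2)) (M_negy (M_comm h3)) (M_negy (M_comm h4))
      (by omega) (by omega) (by omega) (by omega)
    omega
  · have := main' p q (-y2) (-x2) (-y3) (-x3) (-y4) (-x4)
      (M_negx (M_negy (M_comm h2))) (M_negx (M_negy (M_comm h3))) (M_negx (M_negy (M_comm h4)))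
      (by omega) (by omega) (by omega) (by omega)
    omega

lemma M_of_leap {p q : ℤ} (hp : 0 < p) (hq : 0 < q) {a b : ℤ × ℤ}
    (h : leapAdj p q a b) : M p q (a.1 - b.1) (a.2 - b.2) := by
  unfold leapAdj at h
  unfold M
  simp only [abs_eq hp.le, abs_eq hq.le] at h
  exact h

lemma leap_symm {p q : ℤ} {a b : ℤ × ℤ} (h : leapAdj p q a b) : leapAdj p q b a := by
  unfold leapAdj at *
  rw [abs_sub_comm b.1 a.1, abs_sub_comm b.2 a.2]
  exact h

lemma leap_congr {p q : ℤ} {a b c d : ℤ × ℤ} (h1 : a.1 - b.1 = c.1 - d.1)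
    (h2 : a.2 - b.2 = c.2 - d.2) (h : leapAdj p q c d) : leapAdj p q a b := by
  unfold leapAdj at *
  rw [h1, h2]
  exact h

/-- All 4-cycles in a leaper graph are parallelograms. -/
lemma para {p q : ℤ} (hp : 0 < p) (hq : 0 < q) {w x y z : ℤ × ℤ}
    (hwy : w ≠ y) (hxz : x ≠ z)
    (h1 : leapAdj p q w x) (h2 : leapAdj p q x y) (h3 : leapAdj p q y z)
    (h4 : leapAdj p q z w) : w + y = x + z := by
  have hwy' : w.1 ≠ y.1 ∨ w.2 ≠ y.2 := by
    by_contra hc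
    push_neg at hc
    exact hwy (Prod.ext hc.1 hc.2)
  have hxz' : x.1 ≠ z.1 ∨ x.2 ≠ z.2 := by
    by_contra hc
    push_neg at hc
    exact hxz (Prod.ext hc.1 hc.2)
  have m1 := M_of_leap hp hq h1
  have m2 := M_of_leap hp hq h2
  have m3 := M_of_leap hp hq h3
  have m4 := M_of_leap hp hq h4
  have hk := key_int p q (w.1 - x.1) (w.2 - x.2) (x.1 - y.1) (x.2 - y.2)
    (y.1 - z.1) (y.2 - z.2) (z.1 - w.1) (z.2 - w.2) m1 m2 m3 m4
    (by ring) (by ring) (by omega) (by omega)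
  rw [Prod.ext_iff]
  simp only [Prod.fst_add, Prod.snd_add]
  omega

lemma gridAdj_right (x y : ℤ) : gridAdj (x, y) (x + 1, y) := by
  show |x - (x + 1)| + |y - y| = 1
  rw [show x - (x + 1) = -1 by ring, sub_self]
  norm_num

lemma gridAdj_up (x y : ℤ) : gridAdj (x, y) (x, y + 1) := by
  show |x - x| + |y - (y + 1)| = 1
  rw [show y - (y + 1) = -1 by ring, sub_self]
  norm_num

lemma widthX_eq {S : Finset (ℤ × ℤ)} (hS : S.Nonempty) :
    ∃ u ∈ S, ∃ v ∈ S, widthX S = u.1 - v.1 + 1 ∧ ∀ w ∈ S, v.1 ≤ w.1 ∧ w.1 ≤ u.1 := by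
  have hT : (S.image Prod.fst).Nonempty := hS.image _
  obtain ⟨u, huS, hu⟩ := Finset.mem_image.mp (Finset.max'_mem _ hT)
  obtain ⟨v, hvS, hv⟩ := Finset.mem_image.mp (Finset.min'_mem _ hT)
  refine ⟨u, huS, v, hvS, ?_, ?_⟩
  · unfold widthX
    rw [← Finset.coe_max' hT, ← Finset.coe_min' hT, WithBot.unbotD_coe, WithTop.untopD_coe,
      hu, hv]
  · intro w hw
    exact ⟨hv ▸ Finset.min'_le _ _ (Finset.mem_image_of_mem _ hw),
           hu ▸ Finset.le_max' _ _ (Finset.mem_image_of_mem _ hw)⟩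

lemma widthY_eq {S : Finset (ℤ × ℤ)} (hS : S.Nonempty) :
    ∃ u ∈ S, ∃ v ∈ S, widthY S = u.2 - v.2 + 1 ∧ ∀ w ∈ S, v.2 ≤ w.2 ∧ w.2 ≤ u.2 := by
  have hT : (S.image Prod.snd).Nonempty := hS.image _
  obtain ⟨u, huS, hu⟩ := Finset.mem_image.mp (Finset.max'_mem _ hT)
  obtain ⟨v, hvS, hv⟩ := Finset.mem_image.mp (Finset.min'_mem _ hT)
  refine ⟨u, huS, v, hvS, ?_, ?_⟩
  · unfold widthY
    rw [← Finset.coe_max' hT, ← Finset.coe_min' hT, WithBot.unbotD_coe, WithTop.untopD_coe,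
      hu, hv]
  · intro w hw
    exact ⟨hv ▸ Finset.min'_le _ _ (Finset.mem_image_of_mem _ hw),
           hu ▸ Finset.le_max' _ _ (Finset.mem_image_of_mem _ hw)⟩

/-- Embedding criterion: `□_m` embeds into the `(p,q)`-leaper graph `L_n` iff there are two
`m`-vertex paths `α, β` in the infinite leaper graph whose difference sets meet only in `0`
and whose bounding boxes, of sizes `a_X × a_Y` and `b_X × b_Y`, satisfy
`a_X + b_X ≤ n + 1` and `a_Y + b_Y ≤ n + 1`. -/
theorem embedding_criterion (p q : ℤ) (hp : 0 < p) (hq : 0 < q) (hpq : p ≠ q)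
    (m n : ℕ) (hm : 0 < m) (hn : 0 < n) :
    (∃ f : ℤ × ℤ → ℤ × ℤ,
        (∀ v ∈ box m, f v ∈ box n) ∧
        Set.InjOn f (box m) ∧
        (∀ a ∈ box m, ∀ b ∈ box m, gridAdj a b → leapAdj p q (f a) (f b))) ↔
    (∃ A B : ℕ → ℤ × ℤ,
        leaperPath p q m A ∧ leaperPath p q m B ∧
        (∀ i j k l, i < m → j < m → k < m → l < m →
          A i - A j = B k - B l → A i - A j = 0) ∧
        widthX ((Finset.range m).image A) + widthX ((Finset.range m).image B) ≤ n + 1 ∧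
        widthY ((Finset.range m).image A) + widthY ((Finset.range m).image B) ≤ n + 1) := by
  constructor
  · rintro ⟨f, hbox, hinj, hadj⟩
    have hmemb : ∀ x y : ℤ, 1 ≤ x → x ≤ (m : ℤ) → 1 ≤ y → y ≤ (m : ℤ) → ((x, y) : ℤ × ℤ) ∈ box m :=
      fun x y a b c d => ⟨a, b, c, d⟩
    -- each unit cell maps to a parallelogram
    have cell : ∀ x y : ℤ, 1 ≤ x → x + 1 ≤ (m : ℤ) → 1 ≤ y → y + 1 ≤ (m : ℤ) →
        f (x, y) + f (x + 1, y + 1) = f (x + 1, y) + f (x, y + 1) := by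
      intro x y a b c d
      apply para hp hq (w := f (x, y)) (x := f (x + 1, y)) (y := f (x + 1, y + 1))
        (z := f (x, y + 1))
      · intro he
        have := hinj (hmemb x y (by omega) (by omega) (by omega) (by omega))
          (hmemb (x + 1) (y + 1) (by omega) (by omega) (by omega) (by omega)) he
        rw [Prod.mk.injEq] at this
        omega
      · intro he
        have := hinj (hmemb (x + 1) y (by omega) (by omega) (by omega) (by omega))
          (hmemb x (y + 1) (by omega) (by omega) (by omega) (by omega)) he
        rw [Prod.mk.injEq] at this
        omega
      · exact hadj _ (hmemb x y (by omega) (by omega) (by omega) (by omega)) _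
          (hmemb (x + 1) y (by omega) (by omega) (by omega) (by omega)) (gridAdj_right x y)
      · exact hadj _ (hmemb (x + 1) y (by omega) (by omega) (by omega) (by omega)) _
          (hmemb (x + 1) (y + 1) (by omega) (by omega) (by omega) (by omega)) (gridAdj_up (x + 1) y)
      · exact leap_symm (hadj _ (hmemb x (y + 1) (by omega) (by omega) (by omega) (by omega)) _
          (hmemb (x + 1) (y + 1) (by omega) (by omega) (by omega) (by omega))
          (gridAdj_right x (y + 1)))
      · exact leap_symm (hadj _ (hmemb x y (by omega) (by omega) (by omega) (by omega)) _
          (hmemb x (y + 1) (by omega) (by omega) (by omega) (by omega)) (gridAdj_up x y))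
    -- the embedding is additive
    have claim : ∀ i j : ℕ, i < m → j < m →
        f ((i : ℤ) + 1, (j : ℤ) + 1) + f (1, 1) = f ((i : ℤ) + 1, 1) + f (1, (j : ℤ) + 1) := by
      intro i
      induction i with
      | zero =>
        intro j _ _
        norm_num
        exact add_comm _ _
      | succ i ih =>
        intro j
        induction j with
        | zero =>
          intro _ _
          norm_num
        | succ j ihj =>
          intro hi hj
          have c := cell ((i : ℤ) + 1) ((j : ℤ) + 1) (by omega) (by push_cast; omega)
            (by omega) (by push_cast; omega)
          have e1 := ih j (by omega) (by omega)
          have e2 := ih (j + 1) (by omega) (by omega)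
          have e3 := ihj hi (by omega)
          push_cast at c e1 e2 e3 ⊢
          linear_combination c + e2 + e3 - e1
    refine ⟨fun i => f ((i : ℤ) + 1, 1), fun j => f (1, (j : ℤ) + 1), ⟨?_, ?_⟩, ⟨?_, ?_⟩,
      ?_, ?_, ?_⟩
    · -- injectivity of A
      intro i hi j hj he
      have hi' : i < m := hi
      have hj' : j < m := hj
      have := hinj (hmemb _ _ (by omega) (by omega) (by omega) (by omega))
        (hmemb _ _ (by omega) (by omega) (by omega) (by omega)) he
      rw [Prod.mk.injEq] at this
      omega
    · -- path A
      intro i hi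
      have := hadj ((i : ℤ) + 1, 1) (hmemb _ _ (by omega) (by omega) (by omega) (by omega))
        ((i : ℤ) + 1 + 1, 1) (hmemb _ _ (by omega) (by omega) (by omega) (by omega))
        (gridAdj_right _ _)
      push_cast
      exact this
    · -- injectivity of B
      intro i hi j hj he
      have hi' : i < m := hi
      have hj' : j < m := hj
      have := hinj (hmemb _ _ (by omega) (by omega) (by omega) (by omega))
        (hmemb _ _ (by omega) (by omega) (by omega) (by omega)) he
      rw [Prod.mk.injEq] at this
      omega
    · -- path B
      intro i hi
      have := hadj (1, (i : ℤ) + 1) (hmemb _ _ (by omega) (by omega) (by omega) (by omega))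
        (1, (i : ℤ) + 1 + 1) (hmemb _ _ (by omega) (by omega) (by omega) (by omega))
        (gridAdj_up _ _)
      push_cast
      exact this
    · -- difference condition
      intro i j k l hi hj hk hl he
      have h1 := claim i l hi hl
      have h2 := claim j k hj hk
      have hfe : f ((i : ℤ) + 1, (l : ℤ) + 1) = f ((j : ℤ) + 1, (k : ℤ) + 1) := by
        linear_combination h1 - h2 + he
      have := hinj (hmemb _ _ (by omega) (by omega) (by omega) (by omega))
        (hmemb _ _ (by omega) (by omega) (by omega) (by omega)) hfe
      rw [Prod.mk.injEq] at this
      have hij : i = j := by omega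
      rw [hij, sub_self]
    · -- width X
      have hSA : ((Finset.range m).image (fun i : ℕ => f ((i : ℤ) + 1, 1))).Nonempty :=
        (Finset.nonempty_range_iff.mpr hm.ne').image _
      have hSB : ((Finset.range m).image (fun j : ℕ => f (1, (j : ℤ) + 1))).Nonempty :=
        (Finset.nonempty_range_iff.mpr hm.ne').image _
      obtain ⟨uA, huA, vA, hvA, hwA, _⟩ := widthX_eq hSA
      obtain ⟨uB, huB, vB, hvB, hwB, _⟩ := widthX_eq hSB
      obtain ⟨ia, hia, rfl⟩ := Finset.mem_image.mp huA
      obtain ⟨ib, hib, rfl⟩ := Finset.mem_image.mp hvA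
      obtain ⟨ka, hka, rfl⟩ := Finset.mem_image.mp huB
      obtain ⟨kb, hkb, rfl⟩ := Finset.mem_image.mp hvB
      rw [Finset.mem_range] at hia hib hka hkb
      have emax := congrArg Prod.fst (claim ia ka hia hka)
      have emin := congrArg Prod.fst (claim ib kb hib hkb)
      simp only [Prod.fst_add] at emax emin
      obtain ⟨b1, b2, -, -⟩ := hbox ((ia : ℤ) + 1, (ka : ℤ) + 1)
        (hmemb _ _ (by omega) (by omega) (by omega) (by omega))
      obtain ⟨b3, b4, -, -⟩ := hbox ((ib : ℤ) + 1, (kb : ℤ) + 1)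
        (hmemb _ _ (by omega) (by omega) (by omega) (by omega))
      rw [hwA, hwB]
      omega
    · -- width Y
      have hSA : ((Finset.range m).image (fun i : ℕ => f ((i : ℤ) + 1, 1))).Nonempty :=
        (Finset.nonempty_range_iff.mpr hm.ne').image _
      have hSB : ((Finset.range m).image (fun j : ℕ => f (1, (j : ℤ) + 1))).Nonempty :=
        (Finset.nonempty_range_iff.mpr hm.ne').image _
      obtain ⟨uA, huA, vA, hvA, hwA, _⟩ := widthY_eq hSA
      obtain ⟨uB, huB, vB, hvB, hwB, _⟩ := widthY_eq hSB
      obtain ⟨ia, hia, rfl⟩ := Finset.mem_image.mp huA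
      obtain ⟨ib, hib, rfl⟩ := Finset.mem_image.mp hvA
      obtain ⟨ka, hka, rfl⟩ := Finset.mem_image.mp huB
      obtain ⟨kb, hkb, rfl⟩ := Finset.mem_image.mp hvB
      rw [Finset.mem_range] at hia hib hka hkb
      have emax := congrArg Prod.snd (claim ia ka hia hka)
      have emin := congrArg Prod.snd (claim ib kb hib hkb)
      simp only [Prod.snd_add] at emax emin
      obtain ⟨-, -, b1, b2⟩ := hbox ((ia : ℤ) + 1, (ka : ℤ) + 1)
        (hmemb _ _ (by omega) (by omega) (by omega) (by omega))
      obtain ⟨-, -, b3, b4⟩ := hbox ((ib : ℤ) + 1, (kb : ℤ) + 1)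
        (hmemb _ _ (by omega) (by omega) (by omega) (by omega))
      rw [hwA, hwB]
      omega
  · rintro ⟨A, B, ⟨hAinj, hAadj⟩, ⟨hBinj, hBadj⟩, hdiff, hwx, hwy⟩
    have hSA : ((Finset.range m).image A).Nonempty :=
      (Finset.nonempty_range_iff.mpr hm.ne').image _
    have hSB : ((Finset.range m).image B).Nonempty :=
      (Finset.nonempty_range_iff.mpr hm.ne').image _
    obtain ⟨uxA, huxA, vxA, hvxA, hwxA, hbxA⟩ := widthX_eq hSA
    obtain ⟨uyA, huyA, vyA, hvyA, hwyA, hbyA⟩ := widthY_eq hSA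
    obtain ⟨uxB, huxB, vxB, hvxB, hwxB, hbxB⟩ := widthX_eq hSB
    obtain ⟨uyB, huyB, vyB, hvyB, hwyB, hbyB⟩ := widthY_eq hSB
    have hmA : ∀ i : ℕ, i < m → A i ∈ (Finset.range m).image A :=
      fun i hi => Finset.mem_image_of_mem _ (Finset.mem_range.mpr hi)
    have hmB : ∀ j : ℕ, j < m → B j ∈ (Finset.range m).image B :=
      fun j hj => Finset.mem_image_of_mem _ (Finset.mem_range.mpr hj)
    refine ⟨fun v => ((A ((v.1 - 1).toNat)).1 + (B ((v.2 - 1).toNat)).1 - (vxA.1 + vxB.1 - 1),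
      (A ((v.1 - 1).toNat)).2 + (B ((v.2 - 1).toNat)).2 - (vyA.2 + vyB.2 - 1)), ?_, ?_, ?_⟩
    · -- lands in box n
      intro v hv
      obtain ⟨h1, h2, h3, h4⟩ := hv
      have hiv : (v.1 - 1).toNat < m := by omega
      have hjv : (v.2 - 1).toNat < m := by omega
      have bA := hbxA _ (hmA _ hiv)
      have bB := hbxB _ (hmB _ hjv)
      have bA' := hbyA _ (hmA _ hiv)
      have bB' := hbyB _ (hmB _ hjv)
      rw [hwxA, hwxB] at hwx
      rw [hwyA, hwyB] at hwy
      dsimp only [box, Set.mem_setOf_eq]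
      exact ⟨by omega, by omega, by omega, by omega⟩
    · -- injectivity
      intro a ha b hb he
      obtain ⟨a1, a2, a3, a4⟩ := ha
      obtain ⟨b1, b2, b3, b4⟩ := hb
      have hia : (a.1 - 1).toNat < m := by omega
      have hja : (a.2 - 1).toNat < m := by omega
      have hib : (b.1 - 1).toNat < m := by omega
      have hjb : (b.2 - 1).toNat < m := by omega
      rw [Prod.mk.injEq] at he
      obtain ⟨he1, he2⟩ := he
      have hsub : A ((a.1 - 1).toNat) - A ((b.1 - 1).toNat)
          = B ((b.2 - 1).toNat) - B ((a.2 - 1).toNat) := by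
        rw [Prod.ext_iff]
        simp only [Prod.fst_sub, Prod.snd_sub]
        constructor <;> omega
      have hz := hdiff _ _ _ _ hia hib hjb hja hsub
      have hAe : A ((a.1 - 1).toNat) = A ((b.1 - 1).toNat) := by
        have := sub_eq_zero.mp hz
        exact this
      have hie : (a.1 - 1).toNat = (b.1 - 1).toNat := hAinj hia hib hAe
      have hBe : B ((a.2 - 1).toNat) = B ((b.2 - 1).toNat) := by
        rw [hz] at hsub
        have : B ((b.2 - 1).toNat) - B ((a.2 - 1).toNat) = 0 := hsub.symm
        exact (sub_eq_zero.mp this).symm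
      have hje : (a.2 - 1).toNat = (b.2 - 1).toNat := hBinj hja hjb hBe
      have : a.1 = b.1 := by omega
      have : a.2 = b.2 := by omega
      exact Prod.ext (by omega) (by omega)
    · -- adjacency
      intro a ha b hb hg
      obtain ⟨a1, a2, a3, a4⟩ := ha
      obtain ⟨b1, b2, b3, b4⟩ := hb
      have hcases : (a.1 = b.1 + 1 ∧ a.2 = b.2) ∨ (b.1 = a.1 + 1 ∧ a.2 = b.2) ∨
          (a.2 = b.2 + 1 ∧ a.1 = b.1) ∨ (b.2 = a.2 + 1 ∧ a.1 = b.1) := by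
        unfold gridAdj at hg
        rcases abs_cases (a.1 - b.1) with ⟨e1, _⟩ | ⟨e1, _⟩ <;>
          rcases abs_cases (a.2 - b.2) with ⟨e2, _⟩ | ⟨e2, _⟩ <;> omega
      rcases hcases with ⟨hc1, hc2⟩ | ⟨hc1, hc2⟩ | ⟨hc1, hc2⟩ | ⟨hc1, hc2⟩
      · have hidx : (a.1 - 1).toNat = (b.1 - 1).toNat + 1 := by omega
        have hlt : (b.1 - 1).toNat + 1 < m := by omega
        refine leap_congr (c := A ((b.1 - 1).toNat + 1)) (d := A ((b.1 - 1).toNat)) ?_ ?_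
          (leap_symm (hAadj _ hlt))
        · simp only [hidx, hc2]; ring
        · simp only [hidx, hc2]; ring
      · have hidx : (b.1 - 1).toNat = (a.1 - 1).toNat + 1 := by omega
        have hlt : (a.1 - 1).toNat + 1 < m := by omega
        refine leap_congr (c := A ((a.1 - 1).toNat)) (d := A ((a.1 - 1).toNat + 1)) ?_ ?_
          (hAadj _ hlt)
        · simp only [hidx, hc2]; ring
        · simp only [hidx, hc2]; ring
      · have hidx : (a.2 - 1).toNat = (b.2 - 1).toNat + 1 := by omega
        have hlt : (b.2 - 1).toNat + 1 < m := by omega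
        refine leap_congr (c := B ((b.2 - 1).toNat + 1)) (d := B ((b.2 - 1).toNat)) ?_ ?_
          (leap_symm (hBadj _ hlt))
        · simp only [hidx, hc2]; ring
        · simp only [hidx, hc2]; ring
      · have hidx : (b.2 - 1).toNat = (a.2 - 1).toNat + 1 := by omega
        have hlt : (a.2 - 1).toNat + 1 < m := by omega
        refine leap_congr (c := B ((a.2 - 1).toNat)) (d := B ((a.2 - 1).toNat + 1)) ?_ ?_
          (hBadj _ hlt)
        · simp only [hidx, hc2]; ring
        · simp only [hidx, hc2]; ring
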